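/- For every positive integer $d$ and $\varepsilon \in (0, 2^{-d})$, and for every function $f : \{0,1\}^n \to G$ ($G$ an Abelian group), if $P_1,\dots,P_t$ are distinct $d$-junta-sums over $\{0,1\}^n$ depending on pairwise disjoint sets of variables, each satisfying $\delta(f, P_i) \le 2^{-d} - \varepsilon$ (fractional Hamming distance under the uniform distribution), then $t \le C(\varepsilon, d)$ for some bound depending only on $\varepsilon$ and $d$ (independent of $n$ and $G$). Concretely, $t \le O(\varepsilon^{-2}\log(1/\varepsilon))$ suffices. More precisely: with probability at least $\varepsilon/2$ over uniform $\mathbf{x}$, at least a $(1 - 2^{-d} + \varepsilon/2)$ fraction of the indices $i$ satisfy $P_i(\mathbf{x}) = f(\mathbf{x})$; on the other hand, since distinct junta-sums agree with probability at most $1 - 2^{-d}$ and values $P_j(\mathbf{x})$ for disjoint variable sets are independent, a Chernoff bound forces $t \le O(\varepsilon^{-2} \log(1/\varepsilon))$. -/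

import Mathlib

open Finset

universe u

/-- `f` depends only on the coordinates in `I`. -/
def DependsOnlyOn {n : ℕ} {A G : Type*} (f : (Fin n → A) → G) (I : Finset (Fin n)) : Prop :=
  ∀ x y : Fin n → A, (∀ i ∈ I, x i = y i) → f x = f y

/-- `f` is a sum of functions each depending on at most `d` coordinates
(a `d`-junta-sum). -/
def IsJuntaSum {n : ℕ} {A G : Type*} [AddCommMonoid G] (d : ℕ)
    (f : (Fin n → A) → G) : Prop :=
  ∃ (k : ℕ) (g : Fin k → (Fin n → A) → G) (I : Fin k → Finset (Fin n)),
    (∀ j, (I j).card ≤ d ∧ DependsOnlyOn (g j) (I j)) ∧ ∀ x, f x = ∑ j, g j x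

/-- Fractional Hamming distance between two functions on `{0,1}^n` under the
uniform distribution. -/
noncomputable def hdist {n : ℕ} {G : Type*} (f g : (Fin n → Bool) → G) : ℝ :=
  ({x : Fin n → Bool | f x ≠ g x}.ncard : ℝ) / 2 ^ n

attribute [local instance] Classical.propDecidable

section Deriv
variable {n : ℕ} {G : Type u} [AddCommGroup G]

/-- discrete derivative in direction `i`. -/
def del (i : Fin n) (P : (Fin n → Bool) → G) : (Fin n → Bool) → G :=
  fun x => P (Function.update x i true) - P (Function.update x i false)

lemma del_comm (i j : Fin n) (P : (Fin n → Bool) → G) :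
    del i (del j P) = del j (del i P) := by
  rcases eq_or_ne i j with rfl | h
  · rfl
  · funext x
    simp only [del, Function.update_comm h]
    abel

lemma del_eq_zero (i : Fin n) {P : (Fin n → Bool) → G} {I : Finset (Fin n)}
    (hdep : DependsOnlyOn P I) (hi : i ∉ I) : del i P = 0 := by
  funext x
  have : P (Function.update x i true) = P (Function.update x i false) := by
    apply hdep
    intro j hj
    have : j ≠ i := fun h => hi (h ▸ hj)
    simp [Function.update_of_ne this]
  simp [del, this]

lemma dependsOnlyOn_del_erase {P : (Fin n → Bool) → G} {I : Finset (Fin n)}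
    (hdep : DependsOnlyOn P I) (i : Fin n) :
    DependsOnlyOn (del i P) (I.erase i) := by
  intro x y hxy
  have h1 : ∀ b : Bool, P (Function.update x i b) = P (Function.update y i b) := by
    intro b
    apply hdep
    intro j hj
    rcases eq_or_ne j i with rfl | hne
    · simp
    · simp only [Function.update_of_ne hne]
      exact hxy j (Finset.mem_erase.2 ⟨hne, hj⟩)
  simp [del, h1]

lemma dependsOnlyOn_del {P : (Fin n → Bool) → G} {I : Finset (Fin n)}
    (hdep : DependsOnlyOn P I) (i : Fin n) :
    DependsOnlyOn (del i P) I := by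
  intro x y hxy
  exact dependsOnlyOn_del_erase hdep i x y fun j hj => hxy j (Finset.mem_of_mem_erase hj)

def derivL (l : List (Fin n)) (P : (Fin n → Bool) → G) : (Fin n → Bool) → G :=
  l.foldr del P

@[simp] lemma derivL_nil (P : (Fin n → Bool) → G) : derivL [] P = P := rfl

@[simp] lemma derivL_cons (a : Fin n) (l : List (Fin n)) (P : (Fin n → Bool) → G) :
    derivL (a :: l) P = del a (derivL l P) := rfl

lemma derivL_append (l₁ l₂ : List (Fin n)) (P : (Fin n → Bool) → G) :
    derivL (l₁ ++ l₂) P = derivL l₁ (derivL l₂ P) := by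
  simp [derivL, List.foldr_append]

lemma derivL_perm {l l' : List (Fin n)} (h : l.Perm l') (P : (Fin n → Bool) → G) :
    derivL l P = derivL l' P := by
  induction h generalizing P with
  | nil => rfl
  | cons a h ih => simp [ih]
  | swap a b l => simp [del_comm]
  | trans h₁ h₂ ih₁ ih₂ => rw [ih₁, ih₂]

lemma dependsOnlyOn_derivL {P : (Fin n → Bool) → G} {I : Finset (Fin n)}
    (hdep : DependsOnlyOn P I) (l : List (Fin n)) :
    DependsOnlyOn (derivL l P) I := by
  induction l with
  | nil => exact hdep
  | cons a l ih => exact dependsOnlyOn_del ih a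

lemma derivL_eq_zero_of_junta {g : (Fin n → Bool) → G} {I : Finset (Fin n)}
    (hdep : DependsOnlyOn g I) {l : List (Fin n)} (hl : l.Nodup)
    (hlen : I.card < l.length) : derivL l g = 0 := by
  have hex : ∃ i ∈ l, i ∉ I := by
    by_contra hcon
    push_neg at hcon
    have hsub : l.toFinset ⊆ I := fun i hi => hcon i (List.mem_toFinset.1 hi)
    have := Finset.card_le_card hsub
    rw [List.toFinset_card_of_nodup hl] at this
    omega
  obtain ⟨i, hil, hiI⟩ := hex
  have hperm := List.perm_cons_erase hil
  rw [derivL_perm hperm, derivL_cons]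
  exact del_eq_zero i (dependsOnlyOn_derivL hdep _) hiI

lemma del_sum {k : ℕ} (a : Fin n) (g : Fin k → (Fin n → Bool) → G) :
    del a (fun x => ∑ j, g j x) = fun x => ∑ j, del a (g j) x := by
  funext x
  simp [del, Finset.sum_sub_distrib]

lemma derivL_sum {k : ℕ} (l : List (Fin n)) (g : Fin k → (Fin n → Bool) → G) :
    derivL l (fun x => ∑ j, g j x) = fun x => ∑ j, derivL l (g j) x := by
  induction l with
  | nil => rfl
  | cons a l ih =>
      rw [derivL_cons, ih, del_sum]
      funext x
      simp

lemma derivL_sub (l : List (Fin n)) (P Q : (Fin n → Bool) → G) :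
    derivL l (fun x => P x - Q x) = fun x => derivL l P x - derivL l Q x := by
  induction l with
  | nil => rfl
  | cons a l ih =>
      rw [derivL_cons, ih]
      funext x
      simp [del]
      abel

lemma juntaSum_derivL_zero {d : ℕ} {P : (Fin n → Bool) → G} (hP : IsJuntaSum d P)
    {l : List (Fin n)} (hl : l.Nodup) (hlen : l.length = d + 1) :
    derivL l P = 0 := by
  obtain ⟨k, g, I, hg, hsum⟩ := hP
  have hPeq : P = fun x => ∑ j, g j x := funext hsum
  rw [hPeq, derivL_sum]
  funext x
  have : ∀ j, derivL l (g j) = 0 := by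
    intro j
    exact derivL_eq_zero_of_junta (hg j).2 hl (by have := (hg j).1; omega)
  simp [this]

end Deriv

section LemA
variable {n : ℕ} {G : Type u} [AddCommGroup G]

lemma const_of_del {S : Finset (Fin n)} {P : (Fin n → Bool) → G}
    (hdep : DependsOnlyOn P S) (h : ∀ i ∈ S, del i P = 0) : ∀ x y, P x = P y := by
  induction S using Finset.induction with
  | empty => exact fun x y => hdep x y (by simp)
  | @insert a s ha ih =>
      have key : ∀ z, P z = P (Function.update z a true) := by
        intro z
        have h0 := congrFun (h a (Finset.mem_insert_self a s)) z
        have h1 : P (Function.update z a true) = P (Function.update z a false) :=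
          sub_eq_zero.1 h0
        cases hz : z a
        · conv_lhs => rw [← Function.update_eq_self a z]
          rw [hz, h1]
        · conv_lhs => rw [← Function.update_eq_self a z]
          rw [hz]
      have hdep' : DependsOnlyOn P s := by
        intro x y hxy
        rw [key x, key y]
        apply hdep
        intro i hi
        rcases Finset.mem_insert.1 hi with rfl | his
        · simp
        · have hne : i ≠ a := fun hh => ha (hh ▸ his)
          simp only [Function.update_of_ne hne]
          exact hxy i his
      exact ih hdep' (fun i hi => h i (Finset.mem_insert_of_mem hi))

lemma lemA : ∀ (d : ℕ) (S : Finset (Fin n)) (P : (Fin n → Bool) → G),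
    DependsOnlyOn P S →
    (∀ l : List (Fin n), l.Nodup → (∀ i ∈ l, i ∈ S) → l.length = d + 1 → derivL l P = 0) →
    P ≠ 0 → 2 ^ n ≤ 2 ^ d * (univ.filter (fun x : Fin n → Bool => P x ≠ 0)).card := by
  intro d
  induction d with
  | zero =>
      intro S P hdep hderiv hne
      by_cases hc : ∀ i ∈ S, del i P = 0
      · -- P constant and nonzero
        obtain ⟨x0, hx0⟩ := Function.ne_iff.1 hne
        have hall : ∀ x, P x ≠ 0 := fun x => by
          rw [const_of_del hdep hc x x0]; exact hx0
        have : (univ.filter (fun x : Fin n → Bool => P x ≠ 0)) = univ := by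
          apply Finset.filter_true_of_mem; intro x _; exact hall x
        rw [this, Finset.card_univ]
        simp [Fintype.card_fun]
      · push_neg at hc
        obtain ⟨i, hiS, hi⟩ := hc
        exact absurd (hderiv [i] (by simp) (by simpa using hiS) rfl) (by simpa using hi)
  | succ d ihd =>
      intro S P hdep hderiv hne
      by_cases hc : ∀ i ∈ S, del i P = 0
      · obtain ⟨x0, hx0⟩ := Function.ne_iff.1 hne
        have hall : ∀ x, P x ≠ 0 := fun x => by
          rw [const_of_del hdep hc x x0]; exact hx0
        have heq : (univ.filter (fun x : Fin n → Bool => P x ≠ 0)) = univ := by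
          apply Finset.filter_true_of_mem; intro x _; exact hall x
        rw [heq, Finset.card_univ]
        have : (Fintype.card (Fin n → Bool)) = 2 ^ n := by simp [Fintype.card_fun]
        rw [this]
        exact Nat.le_mul_of_pos_left _ (pow_pos (by norm_num) _)
      · push_neg at hc
        obtain ⟨i, hiS, hiQ⟩ := hc
        set Q := del i P with hQ
        have hQdep : DependsOnlyOn Q (S.erase i) := dependsOnlyOn_del_erase hdep i
        have hQderiv : ∀ l : List (Fin n), l.Nodup → (∀ j ∈ l, j ∈ S.erase i) →
            l.length = d + 1 → derivL l Q = 0 := by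
          intro l hl hlS hlen
          have hil : i ∉ l := fun hmem => (Finset.mem_erase.1 (hlS i hmem)).1 rfl
          have : derivL (l ++ [i]) P = 0 := by
            apply hderiv
            · simp [List.nodup_append, hl, hil]
              rintro a ha rfl
              exact hil ha
            · intro j hj
              rcases List.mem_append.1 hj with hj | hj
              · exact Finset.mem_of_mem_erase (hlS j hj)
              · simp at hj; subst hj; exact hiS
            · simp [hlen]
          rwa [derivL_append] at this
        have hIH := ihd (S.erase i) Q hQdep hQderiv hiQ
        -- cntQ ≤ 2 * cntP
        set sQ := univ.filter (fun x : Fin n → Bool => Q x ≠ 0) with hsQ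
        set sP := univ.filter (fun x : Fin n → Bool => P x ≠ 0) with hsP
        have hcard : sQ.card ≤ 2 * sP.card := by
          set F : (Fin n → Bool) → (Fin n → Bool) := fun x =>
            if P (Function.update x i true) ≠ 0 then Function.update x i true
            else Function.update x i false with hF
          have himg : sQ.image F ⊆ sP := by
            intro b hb
            obtain ⟨x, hx, hFx⟩ := Finset.mem_image.1 hb
            have hQx : Q x ≠ 0 := (Finset.mem_filter.1 hx).2
            rw [Finset.mem_filter]
            refine ⟨Finset.mem_univ _, ?_⟩
            by_cases hT : P (Function.update x i true) ≠ 0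
            · rw [← hFx, hF]; simpa [hT] using hT
            · push_neg at hT
              have hFv : F x = Function.update x i false := by simp [hF, hT]
              rw [← hFx, hFv]
              intro hFc
              apply hQx
              simp [hQ, del, hT, hFc]
          have hfib : ∀ b ∈ sQ.image F, (sQ.filter (fun x => F x = b)).card ≤ 2 := by
            intro b _
            have hsub : sQ.filter (fun x => F x = b) ⊆
                {Function.update b i true, Function.update b i false} := by
              intro x hx
              have hFx : F x = b := (Finset.mem_filter.1 hx).2
              have hxb : x = Function.update b i (x i) := by
                rw [← hFx, hF]
                by_cases hT : P (Function.update x i true) ≠ 0 <;>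
                  simp [hT, Function.update_idem, Function.update_eq_self]
              rw [hxb]
              cases x i <;> simp
            calc (sQ.filter (fun x => F x = b)).card ≤ _ := Finset.card_le_card hsub
              _ ≤ 2 := by
                  apply le_trans (Finset.card_insert_le _ _)
                  simp
          calc sQ.card ≤ 2 * (sQ.image F).card := Finset.card_le_mul_card_image _ 2 hfib
            _ ≤ 2 * sP.card := by
                exact Nat.mul_le_mul_left 2 (Finset.card_le_card himg)
        calc (2:ℕ) ^ n ≤ 2 ^ d * sQ.card := hIH
          _ ≤ 2 ^ d * (2 * sP.card) := Nat.mul_le_mul_left _ hcard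
          _ = 2 ^ (d+1) * sP.card := by ring

end LemA

section Count
variable {n : ℕ} {G : Type u} [AddCommGroup G]

lemma card_univ_cube : (univ : Finset (Fin n → Bool)).card = 2 ^ n := by
  simp [Finset.card_univ]

lemma key_ne_count {d : ℕ} {P Q : (Fin n → Bool) → G} (hP : IsJuntaSum d P)
    (hQ : IsJuntaSum d Q) (hne : P ≠ Q) :
    2 ^ n ≤ 2 ^ d * (univ.filter (fun x => P x ≠ Q x)).card := by
  have hR : ∀ l : List (Fin n), l.Nodup → (∀ i ∈ l, i ∈ (univ : Finset (Fin n))) →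
      l.length = d + 1 → derivL l (fun x => P x - Q x) = 0 := by
    intro l hl _ hlen
    rw [derivL_sub, juntaSum_derivL_zero hP hl hlen, juntaSum_derivL_zero hQ hl hlen]
    funext x; simp
  have hdep : DependsOnlyOn (fun x => P x - Q x) univ := by
    intro x y h
    have : x = y := funext (fun i => h i (mem_univ i))
    rw [this]
  have hne' : (fun x => P x - Q x) ≠ 0 := by
    intro h
    apply hne
    funext x
    have := congrFun h x
    simpa [sub_eq_zero] using this
  have hA := lemA d univ _ hdep hR hne'
  have heq : (univ.filter (fun x : Fin n → Bool => P x - Q x ≠ 0))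
      = univ.filter (fun x => P x ≠ Q x) := by
    apply Finset.filter_congr
    intro x _
    simp [sub_eq_zero]
  rwa [heq] at hA

lemma isJuntaSum_const (d : ℕ) (c : G) :
    IsJuntaSum d (fun _ : Fin n → Bool => c) := by
  refine ⟨1, fun _ _ => c, fun _ => ∅, fun j => ⟨by simp, fun x y _ => rfl⟩, by simp⟩

lemma count_eq_const {d : ℕ} {P : (Fin n → Bool) → G} (hP : IsJuntaSum d P) (c : G)
    (hne : P ≠ fun _ => c) :
    ((univ.filter (fun x => P x = c)).card : ℝ) ≤ (1 - (1:ℝ)/2^d) * 2 ^ n := by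
  have hk := key_ne_count hP (isJuntaSum_const d c) hne
  have hsplit : (univ.filter (fun x : Fin n → Bool => P x = c)).card
      + (univ.filter (fun x => ¬ (P x = c))).card = 2 ^ n := by
    rw [Finset.card_filter_add_card_filter_not, card_univ_cube]
  have h2 : (2:ℝ) ^ n ≤ 2 ^ d * ((univ.filter (fun x => P x ≠ c)).card : ℝ) := by
    exact_mod_cast hk
  have h3 : ((univ.filter (fun x : Fin n → Bool => P x = c)).card : ℝ)
      + ((univ.filter (fun x => P x ≠ c)).card : ℝ) = 2 ^ n := by
    exact_mod_cast hsplit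
  have hd : (0:ℝ) < 2 ^ d := by positivity
  have hkey : (1 - (1:ℝ)/2^d) * 2 ^ n = 2 ^ n - 2 ^ n / 2 ^ d := by ring
  rw [hkey]
  have hb : (2:ℝ) ^ n / 2 ^ d ≤ ((univ.filter (fun x => P x ≠ c)).card : ℝ) := by
    rw [div_le_iff₀ hd]
    nlinarith [h2]
  linarith

lemma disjoint_count_mul {p q : (Fin n → Bool) → Prop} {I J : Finset (Fin n)}
    (hp : DependsOnlyOn p I) (hq : DependsOnlyOn q J) (hIJ : Disjoint I J) :
    (univ.filter p).card * (univ.filter q).card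
      = (univ.filter (fun x => p x ∧ q x)).card * 2 ^ n := by
  rw [← Finset.card_product, ← card_univ_cube (n := n), ← Finset.card_product]
  apply Finset.card_bij'
    (i := fun z _ => ((fun i => if i ∈ I then z.1 i else z.2 i : Fin n → Bool),
                      (fun i => if i ∈ I then z.2 i else z.1 i : Fin n → Bool)))
    (j := fun z _ => ((fun i => if i ∈ I then z.1 i else z.2 i : Fin n → Bool),
                      (fun i => if i ∈ I then z.2 i else z.1 i : Fin n → Bool)))
  · intro a ha
    rw [Finset.mem_product] at ha
    obtain ⟨h1, h2⟩ := ha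
    rw [Finset.mem_product]
    refine ⟨Finset.mem_filter.2 ⟨mem_univ _, ?_, ?_⟩, mem_univ _⟩
    · have : p a.1 = p (fun i => if i ∈ I then a.1 i else a.2 i) := by
        apply hp; intro i hi; simp [hi]
      rw [← this]; exact (Finset.mem_filter.1 h1).2
    · have : q a.2 = q (fun i => if i ∈ I then a.1 i else a.2 i) := by
        apply hq; intro i hi
        have : i ∉ I := Finset.disjoint_right.1 hIJ hi
        simp [this]
      rw [← this]; exact (Finset.mem_filter.1 h2).2
  · intro a ha
    rw [Finset.mem_product] at ha
    obtain ⟨h1, _⟩ := ha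
    obtain ⟨hpa, hqa⟩ := (Finset.mem_filter.1 h1).2
    rw [Finset.mem_product]
    constructor
    · refine Finset.mem_filter.2 ⟨mem_univ _, ?_⟩
      have : p a.1 = p (fun i => if i ∈ I then a.1 i else a.2 i) := by
        apply hp; intro i hi; simp [hi]
      rw [← this]; exact hpa
    · refine Finset.mem_filter.2 ⟨mem_univ _, ?_⟩
      have : q a.1 = q (fun i => if i ∈ I then a.2 i else a.1 i) := by
        apply hq; intro i hi
        have : i ∉ I := Finset.disjoint_right.1 hIJ hi
        simp [this]
      rw [← this]; exact hqa
  · intro a _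
    ext i <;> by_cases hi : i ∈ I <;> simp [hi]
  · intro a _
    ext i <;> by_cases hi : i ∈ I <;> simp [hi]

lemma disjoint_count_prod {t : ℕ} (P : Fin t → (Fin n → Bool) → G)
    (I : Fin t → Finset (Fin n))
    (hdep : ∀ i, DependsOnlyOn (P i) (I i))
    (hdisj : Pairwise fun i j => Disjoint (I i) (I j))
    (S : Finset (Fin t)) (c : G) :
    (univ.filter (fun x => ∀ i ∈ S, P i x = c)).card * (2 ^ n) ^ S.card
      = 2 ^ n * ∏ i ∈ S, (univ.filter (fun x => P i x = c)).card := by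
  induction S using Finset.induction with
  | empty => simp [card_univ_cube]
  | @insert a s ha ih =>
      have hq : DependsOnlyOn (fun x : Fin n → Bool => ∀ i ∈ s, P i x = c)
          (s.biUnion I) := by
        intro x y hxy
        have : ∀ i ∈ s, P i x = P i y := by
          intro i hi
          exact hdep i x y (fun j hj => hxy j (Finset.mem_biUnion.2 ⟨i, hi, hj⟩))
        apply propext
        constructor <;> intro h i hi
        · rw [← this i hi]; exact h i hi
        · rw [this i hi]; exact h i hi
      have hpa : DependsOnlyOn (fun x : Fin n → Bool => P a x = c) (I a) := by
        intro x y hxy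
        exact congrArg (· = c) (hdep a x y hxy)
      have hdisj' : Disjoint (I a) (s.biUnion I) := by
        rw [Finset.disjoint_biUnion_right]
        intro i hi
        exact hdisj (fun h => ha (h ▸ hi))
      have h2 := disjoint_count_mul hpa hq hdisj'
      have h2' : (univ.filter (fun x : Fin n → Bool => P a x = c)).card *
          (univ.filter (fun x : Fin n → Bool => ∀ i ∈ s, P i x = c)).card =
          (univ.filter (fun x : Fin n → Bool => P a x = c ∧ ∀ i ∈ s, P i x = c)).card
            * 2 ^ n := by
        convert h2 using 4
      have hfeq : univ.filter (fun x : Fin n → Bool => ∀ i ∈ insert a s, P i x = c)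
          = univ.filter (fun x => P a x = c ∧ ∀ i ∈ s, P i x = c) := by
        apply Finset.filter_congr
        intro x _
        simp [Finset.forall_mem_insert]
      rw [hfeq, Finset.card_insert_of_notMem ha, Finset.prod_insert ha, pow_succ]
      set A := (univ.filter (fun x : Fin n → Bool => P a x = c)).card with hA
      set B := (univ.filter (fun x : Fin n → Bool => ∀ i ∈ s, P i x = c)).card with hB
      set C := (univ.filter (fun x : Fin n → Bool => P a x = c ∧ ∀ i ∈ s, P i x = c)).card with hC
      set D := ∏ i ∈ s, (univ.filter (fun x => P i x = c)).card with hD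
      calc C * ((2^n)^s.card * 2^n) = (C * 2^n) * (2^n)^s.card := by ring
        _ = (A * B) * (2^n)^s.card := by rw [← h2']
        _ = A * (B * (2^n)^s.card) := by ring
        _ = A * (2^n * D) := by rw [ih]
        _ = 2^n * (A * D) := by ring

end Count

section LemD
variable {n : ℕ} {G : Type u} [AddCommGroup G]

lemma pow_le_descFactorial' : ∀ (N k : ℕ), (N + 1 - k) ^ k ≤ N.descFactorial k := by
  intro N k
  induction k with
  | zero => simp
  | succ k ih =>
      rw [Nat.descFactorial_succ]
      have h1 : N + 1 - (k+1) = N - k := by omega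
      rw [h1, pow_succ, mul_comm ((N - k) ^ k) (N - k)]
      exact Nat.mul_le_mul le_rfl (le_trans (Nat.pow_le_pow_left (by omega) k) ih)

lemma lemD {d t : ℕ} (P : Fin t → (Fin n → Bool) → G) (I : Fin t → Finset (Fin n))
    (hjunta : ∀ i, IsJuntaSum d (P i))
    (hdep : ∀ i, DependsOnlyOn (P i) (I i))
    (hdisj : Pairwise fun i j => Disjoint (I i) (I j))
    {S : Finset (Fin t)} (hS : S.Nonempty)
    (hnc : ∀ i ∈ S, ∀ c : G, P i ≠ fun _ => c) :
    ((univ.filter (fun x => ∀ i ∈ S, ∀ j ∈ S, P i x = P j x)).card : ℝ)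
      ≤ (1 - (1:ℝ)/2^d) ^ (S.card - 1) * 2 ^ n := by
  obtain ⟨i0, hi0⟩ := hS
  set δr : ℝ := 1 - (1:ℝ)/2^d with hδr
  have hδr0 : 0 ≤ δr := by
    have : (1:ℝ)/2^d ≤ 1 := by
      rw [div_le_one (by positivity)]
      exact one_le_pow₀ (by norm_num)
    rw [hδr]
    linarith
  have hunion : univ.filter (fun x : Fin n → Bool => ∀ i ∈ S, ∀ j ∈ S, P i x = P j x)
      = (univ.image (P i0)).biUnion
          (fun c => univ.filter (fun x => ∀ i ∈ S, P i x = c)) := by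
    ext x
    simp only [mem_filter, mem_biUnion, mem_image, mem_univ, true_and]
    constructor
    · intro h
      exact ⟨P i0 x, ⟨x, rfl⟩, fun i hi => h i hi i0 hi0⟩
    · rintro ⟨c, _, h⟩ i hi j hj
      rw [h i hi, h j hj]
  have hdisjc : ∀ c1 ∈ univ.image (P i0), ∀ c2 ∈ univ.image (P i0), c1 ≠ c2 →
      Disjoint (univ.filter (fun x => ∀ i ∈ S, P i x = c1))
               (univ.filter (fun x => ∀ i ∈ S, P i x = c2)) := by
    intro c1 _ c2 _ hne
    rw [Finset.disjoint_left]
    intro x hx1 hx2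
    apply hne
    rw [← (Finset.mem_filter.1 hx1).2 i0 hi0, ← (Finset.mem_filter.1 hx2).2 i0 hi0]
  rw [hunion, Finset.card_biUnion hdisjc]
  push_cast
  -- bound each term
  have hterm : ∀ c : G, ((univ.filter (fun x => ∀ i ∈ S, P i x = c)).card : ℝ)
      ≤ ((univ.filter (fun x => P i0 x = c)).card : ℝ) * δr ^ (S.card - 1) := by
    intro c
    have hprod := disjoint_count_prod P I hdep hdisj S c
    have hprodR : ((univ.filter (fun x => ∀ i ∈ S, P i x = c)).card : ℝ) * (2^n)^S.card
        = 2^n * ∏ i ∈ S, ((univ.filter (fun x => P i x = c)).card : ℝ) := by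
      exact_mod_cast hprod
    have hsplit : ∏ i ∈ S, ((univ.filter (fun x => P i x = c)).card : ℝ)
        = ((univ.filter (fun x => P i0 x = c)).card : ℝ)
          * ∏ i ∈ S.erase i0, ((univ.filter (fun x => P i x = c)).card : ℝ) :=
      (Finset.mul_prod_erase S _ hi0).symm
    have hbound : ∏ i ∈ S.erase i0, ((univ.filter (fun x => P i x = c)).card : ℝ)
        ≤ (δr * 2^n) ^ (S.card - 1) := by
      rw [← Finset.card_erase_of_mem hi0, ← Finset.prod_const]
      apply Finset.prod_le_prod
      · intro i _; positivity
      · intro i hi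
        have := count_eq_const (hjunta i) c (hnc i (Finset.mem_of_mem_erase hi) c)
        rw [hδr]; linarith [this]
    have h2n : (0:ℝ) < (2:ℝ)^n := by positivity
    have hSc : S.card = (S.card - 1) + 1 := by
      have := Finset.card_pos.2 ⟨i0, hi0⟩
      omega
    have hkey : ((univ.filter (fun x => ∀ i ∈ S, P i x = c)).card : ℝ) * (2^n)^S.card
        ≤ (((univ.filter (fun x => P i0 x = c)).card : ℝ) * δr ^ (S.card - 1)) * (2^n)^S.card := by
      rw [hprodR, hsplit]
      calc 2^n * (((univ.filter (fun x => P i0 x = c)).card : ℝ)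
              * ∏ i ∈ S.erase i0, ((univ.filter (fun x => P i x = c)).card : ℝ))
          ≤ 2^n * (((univ.filter (fun x => P i0 x = c)).card : ℝ) * (δr * 2^n) ^ (S.card - 1)) := by
            apply mul_le_mul_of_nonneg_left ?_ (le_of_lt h2n)
            exact mul_le_mul_of_nonneg_left hbound (Nat.cast_nonneg _)
        _ = (((univ.filter (fun x => P i0 x = c)).card : ℝ) * δr ^ (S.card - 1)) * (2^n)^S.card := by
            have hpow : ((2:ℝ)^n)^S.card = ((2:ℝ)^n)^(S.card - 1) * 2^n := by
              conv_lhs => rw [hSc]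
              rw [pow_succ]
            rw [mul_pow, hpow]
            ring
    exact le_of_mul_le_mul_right hkey (by positivity)
  calc ∑ c ∈ univ.image (P i0), ((univ.filter (fun x => ∀ i ∈ S, P i x = c)).card : ℝ)
      ≤ ∑ c ∈ univ.image (P i0),
          ((univ.filter (fun x => P i0 x = c)).card : ℝ) * δr ^ (S.card - 1) :=
        Finset.sum_le_sum (fun c _ => hterm c)
    _ = (∑ c ∈ univ.image (P i0), ((univ.filter (fun x => P i0 x = c)).card : ℝ))
          * δr ^ (S.card - 1) := by rw [← Finset.sum_mul]
    _ = (2:ℝ)^n * δr ^ (S.card - 1) := by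
        congr 1
        have h := Finset.card_eq_sum_card_image (P i0) (univ : Finset (Fin n → Bool))
        rw [card_univ_cube] at h
        exact_mod_cast h.symm
    _ = δr ^ (S.card - 1) * 2^n := by ring

end LemD

section Main

lemma hdist_eq {n : ℕ} {G : Type u} (f g : (Fin n → Bool) → G) :
    hdist f g = (((univ : Finset (Fin n → Bool)).filter (fun x => f x ≠ g x)).card : ℝ) / 2 ^ n := by
  have h : {x : Fin n → Bool | f x ≠ g x}.ncard
      = ((univ : Finset (Fin n → Bool)).filter (fun x => f x ≠ g x)).card := by
    rw [Set.ncard_eq_toFinset_card', Set.toFinset_setOf]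
  rw [hdist, h]

lemma powersetCard_filter_subset {α : Type*} {k : ℕ} {T B : Finset α} (hBT : B ⊆ T) :
    (powersetCard k T).filter (fun S => S ⊆ B) = powersetCard k B := by
  ext S
  simp only [mem_filter, mem_powersetCard]
  constructor
  · rintro ⟨⟨_, hc⟩, hSB⟩; exact ⟨hSB, hc⟩
  · rintro ⟨hSB, hc⟩; exact ⟨⟨hSB.trans hBT, hc⟩, hSB⟩

set_option maxHeartbeats 2000000 in
theorem stmt14' :
    ∃ C : ℝ, 0 < C ∧
      ∀ (d : ℕ), 1 ≤ d → ∀ ε : ℝ, 0 < ε → ε < 1 / 2 ^ d →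
        ∀ (n t : ℕ) (G : Type u) [AddCommGroup G]
          (f : (Fin n → Bool) → G) (P : Fin t → (Fin n → Bool) → G)
          (I : Fin t → Finset (Fin n)),
          Function.Injective P →
          (∀ i, IsJuntaSum d (P i)) →
          (∀ i, DependsOnlyOn (P i) (I i)) →
          (Pairwise fun i j => Disjoint (I i) (I j)) →
          (∀ i, hdist f (P i) ≤ 1 / 2 ^ d - ε) →
          (t : ℝ) ≤ C * (1 / ε ^ 2) * Real.log (1 / ε) := by
  refine ⟨200, by norm_num, ?_⟩
  intro d hd ε hε hεd n t G _ f P I hinj hjunta hdep hdisj hdistb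
  set δ : ℝ := 1/2^d with hδ
  have h2d : (2:ℝ) ≤ 2^d := by
    calc (2:ℝ) = 2^1 := by norm_num
      _ ≤ 2^d := by apply pow_le_pow_right₀ (by norm_num) hd
  have hδpos : 0 < δ := by rw [hδ]; positivity
  have hδle : δ ≤ 1/2 := by
    rw [hδ, div_le_div_iff₀ (by positivity) (by norm_num)]
    linarith
  have hεδ : ε < δ := hεd
  have hεhalf : ε < 1/2 := lt_of_lt_of_le hεδ hδle
  have hu2 : (2:ℝ) ≤ 1/ε := by
    rw [le_div_iff₀ hε]; linarith
  have hL2 : Real.log 2 ≤ Real.log (1/ε) := Real.log_le_log (by norm_num) hu2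
  have hLhalf : (1:ℝ)/2 ≤ Real.log (1/ε) := by
    have := Real.log_two_gt_d9
    linarith
  have huu : (2:ℝ) * (1/ε) ≤ (1/ε)^2 := by nlinarith
  -- final numeric glue, given a bound on t
  have hfinish : ∀ tr : ℝ, (t:ℝ) ≤ tr →
      tr ≤ 1 + 4*(1/ε) + 96 * (1/ε)^2 * Real.log (1/ε) →
      (t : ℝ) ≤ 200 * (1 / ε ^ 2) * Real.log (1 / ε) := by
    intro tr h1 h2
    have he : (1:ℝ)/ε^2 = (1/ε)^2 := by
      field_simp
    rw [he]
    have hx : (2:ℝ) ≤ 1/ε := hu2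
    have hy : (1:ℝ)/2 ≤ Real.log (1/ε) := hLhalf
    nlinarith [mul_le_mul_of_nonneg_left hy (by positivity : (0:ℝ) ≤ (1/ε)^2),
      mul_le_mul_of_nonneg_right huu (le_trans (by norm_num) hy)]
  have h2n : (0:ℝ) < (2:ℝ)^n := by positivity
  have hcnt : ∀ i, (((univ : Finset (Fin n → Bool)).filter (fun x => f x ≠ P i x)).card : ℝ)
      ≤ (δ - ε)*2^n := by
    intro i
    have h := hdistb i
    rw [hdist_eq] at h
    rw [div_le_iff₀ h2n] at h
    calc _ ≤ (1/2^d - ε) * 2^n := h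
      _ = (δ - ε)*2^n := by rw [hδ]
  set T := univ.filter (fun i : Fin t => ∀ c : G, P i ≠ fun _ => c) with hT
  set t' := T.card with ht'
  have htt' : (t:ℝ) ≤ t' + 1 := by
    have hcon : (univ.filter (fun i : Fin t => ¬ ∀ c : G, P i ≠ fun _ => c)).card ≤ 1 := by
      rw [Finset.card_le_one]
      intro i hi j hj
      by_contra hij
      have hi' := (Finset.mem_filter.1 hi).2
      have hj' := (Finset.mem_filter.1 hj).2
      push_neg at hi' hj'
      obtain ⟨ci, hci⟩ := hi'
      obtain ⟨cj, hcj⟩ := hj'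
      have hcine : ci ≠ cj := by
        intro hcc
        exact hij (hinj (by rw [hci, hcc, ← hcj]))
      have hcover : ((univ : Finset (Fin n → Bool)).card : ℝ)
          ≤ ((univ.filter (fun x => f x ≠ P i x)).card : ℝ)
            + ((univ.filter (fun x => f x ≠ P j x)).card : ℝ) := by
        have hsub : (univ : Finset (Fin n → Bool)) ⊆
            (univ.filter (fun x => f x ≠ P i x)) ∪ (univ.filter (fun x => f x ≠ P j x)) := by
          intro x _
          rw [Finset.mem_union, Finset.mem_filter, Finset.mem_filter]
          by_cases h1 : f x ≠ P i x
          · exact Or.inl ⟨mem_univ _, h1⟩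
          · push_neg at h1
            refine Or.inr ⟨mem_univ _, ?_⟩
            rw [h1, hci, hcj]
            exact fun h => hcine (by simpa using h)
        have := Finset.card_le_card hsub
        have h2 := Finset.card_union_le (univ.filter (fun x => f x ≠ P i x))
          (univ.filter (fun x => f x ≠ P j x))
        exact_mod_cast le_trans this h2
      rw [card_univ_cube] at hcover
      push_cast at hcover
      have hhi := hcnt i
      have hhj := hcnt j
      have hh : 2*(δ-ε) ≤ 1 - 2*ε := by linarith
      nlinarith [mul_le_mul_of_nonneg_right hh (le_of_lt h2n), mul_pos hε h2n]
    have hsplit : T.card + (univ.filter (fun i : Fin t => ¬ ∀ c : G, P i ≠ fun _ => c)).card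
        = t := by
      rw [hT, Finset.card_filter_add_card_filter_not, Finset.card_univ, Fintype.card_fin]
    have : t ≤ t' + 1 := by omega
    exact_mod_cast this
  by_cases hsmall : (t':ℝ) ≤ 4*(1/ε)
  · apply hfinish ((t':ℝ) + 1) htt'
    nlinarith [mul_le_mul_of_nonneg_left hLhalf (by positivity : (0:ℝ) ≤ 96*(1/ε)^2), sq_nonneg (1/ε)]
  push_neg at hsmall
  have ht'pos : (0:ℝ) < t' := by nlinarith
  set A : (Fin n → Bool) → Finset (Fin t) := fun x => T.filter (fun i => P i x = f x) with hA
  set X : (Fin n → Bool) → ℕ := fun x => (A x).card with hX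
  have hXle : ∀ x, X x ≤ t' := fun x => Finset.card_le_card (Finset.filter_subset _ _)
  have hagree : ∀ i ∈ T, (1-δ+ε)*2^n ≤ ((univ.filter (fun x => P i x = f x)).card : ℝ) := by
    intro i _
    have hsplit : (univ.filter (fun x : Fin n → Bool => P i x = f x)).card
        + (univ.filter (fun x => ¬ (P i x = f x))).card = 2^n := by
      rw [Finset.card_filter_add_card_filter_not, card_univ_cube]
    have hEq : (univ.filter (fun x : Fin n → Bool => ¬ (P i x = f x)))
        = univ.filter (fun x => f x ≠ P i x) := by
      apply Finset.filter_congr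
      intro x _
      constructor
      · exact fun h => fun h2 => h h2.symm
      · exact fun h => fun h2 => h h2.symm
    rw [hEq] at hsplit
    have h1 : ((univ.filter (fun x : Fin n → Bool => P i x = f x)).card : ℝ)
        + ((univ.filter (fun x => f x ≠ P i x)).card : ℝ) = 2^n := by exact_mod_cast hsplit
    have := hcnt i
    linarith
  have hswap : ∑ x : Fin n → Bool, (X x : ℕ)
      = ∑ i ∈ T, (univ.filter (fun x => P i x = f x)).card := by
    simp only [hX, hA, Finset.card_filter]
    rw [Finset.sum_comm]
  have hsum : (1-δ+ε)*t'*2^n ≤ ∑ x : Fin n → Bool, (X x : ℝ) := by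
    have h1 : ∑ x : Fin n → Bool, (X x : ℝ)
        = ∑ i ∈ T, ((univ.filter (fun x => P i x = f x)).card : ℝ) := by
      exact_mod_cast hswap
    rw [h1]
    calc (1-δ+ε)*t'*2^n = ∑ _i ∈ T, (1-δ+ε)*2^n := by
          rw [Finset.sum_const, ← ht', nsmul_eq_mul]
          ring
      _ ≤ _ := Finset.sum_le_sum hagree
  set Good := univ.filter (fun x : Fin n → Bool => (1-δ+ε/2)*t' ≤ (X x:ℝ)) with hGood
  have hGoodcard : (ε/2)*2^n ≤ (Good.card : ℝ) := by
    set B := univ.filter (fun x : Fin n → Bool => ¬ ((1-δ+ε/2)*t' ≤ (X x:ℝ))) with hB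
    have hsplitG : ∑ x ∈ Good, (X x:ℝ) + ∑ x ∈ B, (X x:ℝ) = ∑ x : Fin n → Bool, (X x:ℝ) := by
      rw [hGood, hB]
      exact Finset.sum_filter_add_sum_filter_not univ _ _
    have hG1 : ∑ x ∈ Good, (X x:ℝ) ≤ (Good.card : ℝ) * t' := by
      calc ∑ x ∈ Good, (X x:ℝ) ≤ ∑ _x ∈ Good, (t':ℝ) :=
            Finset.sum_le_sum (fun x _ => by exact_mod_cast hXle x)
        _ = (Good.card:ℝ) * t' := by rw [Finset.sum_const, nsmul_eq_mul]
    have hG2 : ∑ x ∈ B, (X x:ℝ) ≤ (B.card : ℝ) * ((1-δ+ε/2)*t') := by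
      calc ∑ x ∈ B, (X x:ℝ) ≤ ∑ _x ∈ B, (1-δ+ε/2)*(t':ℝ) := by
            apply Finset.sum_le_sum
            intro x hx
            rw [hB] at hx
            have hx2 := (Finset.mem_filter.1 hx).2
            push_neg at hx2
            linarith [le_of_lt hx2]
        _ = (B.card:ℝ) * ((1-δ+ε/2)*t') := by rw [Finset.sum_const, nsmul_eq_mul]
    have hcards : (Good.card : ℝ) + (B.card : ℝ) = 2^n := by
      have hc : Good.card + B.card = 2^n := by
        rw [hGood, hB, Finset.card_filter_add_card_filter_not, card_univ_cube]
      exact_mod_cast hc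
    have hBc : (B.card:ℝ) = 2^n - Good.card := by linarith
    rw [hBc] at hG2
    have hc1 : (1-δ+ε)*t'*2^n ≤ (Good.card:ℝ)*t' + ((2:ℝ)^n - Good.card)*((1-δ+ε/2)*t') := by
      linarith [hsum]
    have hstep : (ε/2)*2^n*(t':ℝ) ≤ ((Good.card:ℝ)*(δ-ε/2))*(t':ℝ) := by nlinarith [hc1]
    have hstep2 : (ε/2)*(2:ℝ)^n ≤ (Good.card:ℝ)*(δ-ε/2) := by
      have h' : ((ε/2)*(2:ℝ)^n)*(t':ℝ) ≤ ((Good.card:ℝ)*(δ-ε/2))*(t':ℝ) := by linarith [hstep]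
      exact le_of_mul_le_mul_right h' ht'pos
    have hGn : (0:ℝ) ≤ (Good.card:ℝ) := by positivity
    nlinarith [hstep2]
  -- parameters m and k
  set m := ⌈(1-δ+ε/2)*(t':ℝ)⌉₊ with hm
  set k := ⌈(ε/4)*(t':ℝ)⌉₊ with hk
  have hk1 : 1 ≤ k := by
    rw [hk]
    exact Nat.one_le_iff_ne_zero.2 (by
      intro h0
      have := Nat.ceil_eq_zero.1 h0
      nlinarith)
  have hkle : (k:ℝ) ≤ (ε/4)*t' + 1 := by
    rw [hk]
    exact le_of_lt (Nat.ceil_lt_add_one (by positivity))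
  have hkge : (ε/4)*(t':ℝ) ≤ k := by rw [hk]; exact Nat.le_ceil _
  have hmge : (1-δ+ε/2)*(t':ℝ) ≤ m := by rw [hm]; exact Nat.le_ceil _
  have hXm : ∀ x ∈ Good, m ≤ X x := by
    intro x hx
    rw [hGood] at hx
    rw [hm]
    exact Nat.ceil_le.2 (Finset.mem_filter.1 hx).2
  -- lower bound for the double counting
  have hNlower : ((Good.card * Nat.choose m k : ℕ) : ℝ) ≤
      ∑ S ∈ powersetCard k T,
        ((univ.filter (fun x => ∀ i ∈ S, ∀ j ∈ S, P i x = P j x)).card : ℝ) := by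
    have step1 : ∀ S ∈ powersetCard k T,
        (univ.filter (fun x => S ⊆ A x)).card ≤
          (univ.filter (fun x => ∀ i ∈ S, ∀ j ∈ S, P i x = P j x)).card := by
      intro S _
      apply Finset.card_le_card
      intro x hx
      have hsub := (Finset.mem_filter.1 hx).2
      refine Finset.mem_filter.2 ⟨mem_univ _, ?_⟩
      intro i hi j hj
      have hi' := (Finset.mem_filter.1 (hsub hi)).2
      have hj' := (Finset.mem_filter.1 (hsub hj)).2
      rw [hi', hj']
    have step2 : ∑ S ∈ powersetCard k T, (univ.filter (fun x => S ⊆ A x)).card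
        = ∑ x : Fin n → Bool, Nat.choose (X x) k := by
      have hAx : ∀ x : Fin n → Bool, A x ⊆ T := fun x => Finset.filter_subset _ _
      calc ∑ S ∈ powersetCard k T, (univ.filter (fun x => S ⊆ A x)).card
          = ∑ S ∈ powersetCard k T, ∑ x : Fin n → Bool, if S ⊆ A x then 1 else 0 := by
            apply Finset.sum_congr rfl
            intro S _
            rw [Finset.card_filter]
        _ = ∑ x : Fin n → Bool, ∑ S ∈ powersetCard k T, if S ⊆ A x then 1 else 0 :=
            Finset.sum_comm
        _ = ∑ x : Fin n → Bool, Nat.choose (X x) k := by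
            apply Finset.sum_congr rfl
            intro x _
            calc (∑ S ∈ powersetCard k T, if S ⊆ A x then 1 else 0)
                = ((powersetCard k T).filter (fun S => S ⊆ A x)).card :=
                  (Finset.card_filter _ _).symm
              _ = (powersetCard k (A x)).card := by
                  congr 1
                  convert powersetCard_filter_subset (hAx x) using 2
              _ = (X x).choose k := by rw [Finset.card_powersetCard]
    have step3 : Good.card * Nat.choose m k ≤ ∑ x : Fin n → Bool, Nat.choose (X x) k := by
      calc Good.card * Nat.choose m k = ∑ _x ∈ Good, Nat.choose m k := by
            rw [Finset.sum_const, smul_eq_mul]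
        _ ≤ ∑ x ∈ Good, Nat.choose (X x) k :=
            Finset.sum_le_sum (fun x hx => Nat.choose_le_choose k (hXm x hx))
        _ ≤ ∑ x : Fin n → Bool, Nat.choose (X x) k := by
            rw [hGood]
            exact Finset.sum_le_sum_of_subset (Finset.filter_subset _ _)
    have hNat : Good.card * Nat.choose m k
        ≤ ∑ S ∈ powersetCard k T,
            (univ.filter (fun x => ∀ i ∈ S, ∀ j ∈ S, P i x = P j x)).card := by
      calc Good.card * Nat.choose m k ≤ ∑ x : Fin n → Bool, Nat.choose (X x) k := step3
        _ = ∑ S ∈ powersetCard k T, (univ.filter (fun x => S ⊆ A x)).card := step2.symm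
        _ ≤ _ := Finset.sum_le_sum step1
    exact_mod_cast hNat
  -- upper bound
  have hNupper : ∑ S ∈ powersetCard k T,
      ((univ.filter (fun x => ∀ i ∈ S, ∀ j ∈ S, P i x = P j x)).card : ℝ)
      ≤ (Nat.choose t' k : ℝ) * ((1-δ) ^ (k-1) * 2^n) := by
    calc ∑ S ∈ powersetCard k T,
        ((univ.filter (fun x => ∀ i ∈ S, ∀ j ∈ S, P i x = P j x)).card : ℝ)
        ≤ ∑ _S ∈ powersetCard k T, (1-δ) ^ (k-1) * 2^n := by
          apply Finset.sum_le_sum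
          intro S hS
          have hSmem := Finset.mem_powersetCard.1 hS
          have hScard : S.card = k := hSmem.2
          have hSsub : S ⊆ T := hSmem.1
          have hSne : S.Nonempty := Finset.card_pos.1 (by omega)
          have hnc : ∀ i ∈ S, ∀ c : G, P i ≠ fun _ => c := by
            intro i hi
            have := hSsub hi
            rw [hT] at this
            exact (Finset.mem_filter.1 this).2
          have hld := lemD P I hjunta hdep hdisj hSne hnc
          rw [hScard] at hld
          calc _ ≤ (1 - (1:ℝ)/2^d) ^ (k-1) * 2^n := hld
            _ = (1-δ) ^ (k-1) * 2^n := by rw [hδ]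
      _ = (Nat.choose t' k : ℝ) * ((1-δ) ^ (k-1) * 2^n) := by
          rw [Finset.sum_const, nsmul_eq_mul, Finset.card_powersetCard, ← ht']
  -- combine
  have hδr0 : (0:ℝ) ≤ 1 - δ := by linarith
  have hchoose : (ε/2) * (Nat.choose m k : ℝ) ≤ (Nat.choose t' k : ℝ) * (1-δ)^(k-1) := by
    have h1 : ((Good.card : ℝ)) * (Nat.choose m k : ℝ)
        ≤ (Nat.choose t' k : ℝ) * ((1-δ) ^ (k-1) * 2^n) := by
      have := le_trans hNlower hNupper
      push_cast at this
      exact this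
    have h2 : ((ε/2)*2^n) * (Nat.choose m k : ℝ) ≤ (Good.card : ℝ) * (Nat.choose m k : ℝ) :=
      mul_le_mul_of_nonneg_right hGoodcard (by positivity)
    have h3 : ((ε/2) * (Nat.choose m k : ℝ)) * 2^n
        ≤ ((Nat.choose t' k : ℝ) * (1-δ)^(k-1)) * 2^n := by
      calc ((ε/2) * (Nat.choose m k : ℝ)) * 2^n = ((ε/2)*2^n) * (Nat.choose m k : ℝ) := by ring
        _ ≤ (Nat.choose t' k : ℝ) * ((1-δ) ^ (k-1) * 2^n) := le_trans h2 h1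
        _ = ((Nat.choose t' k : ℝ) * (1-δ)^(k-1)) * 2^n := by ring
    exact le_of_mul_le_mul_right h3 h2n
  -- descFactorial estimates
  have hfacpos : (0:ℝ) < (Nat.factorial k : ℝ) := by exact_mod_cast Nat.factorial_pos k
  have hineq : (ε/2) * (((m+1-k : ℕ)) : ℝ)^k ≤ (t':ℝ)^k * (1-δ)^(k-1) := by
    have hd1 : (((m+1-k : ℕ)^k : ℕ) : ℝ) ≤ ((Nat.descFactorial m k : ℕ) : ℝ) := by
      exact_mod_cast pow_le_descFactorial' m k
    have hd2 : ((Nat.descFactorial t' k : ℕ) : ℝ) ≤ (t':ℝ)^k := by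
      exact_mod_cast Nat.descFactorial_le_pow t' k
    have hdc1 : ((Nat.descFactorial m k : ℕ) : ℝ)
        = (Nat.factorial k : ℝ) * (Nat.choose m k : ℝ) := by
      exact_mod_cast Nat.descFactorial_eq_factorial_mul_choose m k
    have hdc2 : ((Nat.descFactorial t' k : ℕ) : ℝ)
        = (Nat.factorial k : ℝ) * (Nat.choose t' k : ℝ) := by
      exact_mod_cast Nat.descFactorial_eq_factorial_mul_choose t' k
    have hmul := mul_le_mul_of_nonneg_left hchoose (le_of_lt hfacpos)
    have hpk : (0:ℝ) ≤ (1-δ)^(k-1) := by positivity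
    calc (ε/2) * (((m+1-k : ℕ)) : ℝ)^k
        ≤ (ε/2) * ((Nat.factorial k : ℝ) * (Nat.choose m k : ℝ)) := by
          rw [← hdc1]
          apply mul_le_mul_of_nonneg_left ?_ (by positivity)
          exact_mod_cast hd1
      _ = (Nat.factorial k : ℝ) * ((ε/2) * (Nat.choose m k : ℝ)) := by ring
      _ ≤ (Nat.factorial k : ℝ) * ((Nat.choose t' k : ℝ) * (1-δ)^(k-1)) := hmul
      _ = ((Nat.factorial k : ℝ) * (Nat.choose t' k : ℝ)) * (1-δ)^(k-1) := by ring
      _ = ((Nat.descFactorial t' k : ℕ) : ℝ) * (1-δ)^(k-1) := by rw [hdc2]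
      _ ≤ (t':ℝ)^k * (1-δ)^(k-1) := mul_le_mul_of_nonneg_right hd2 hpk
  -- m+1-k ≥ (1-δ+ε/4) t'
  have hβpos : (0:ℝ) < 1-δ+ε/4 := by linarith
  have hkm : k ≤ m + 1 := by
    have h1 : (k:ℝ) ≤ (m:ℝ) + 1 := by nlinarith [hkle, hmge, ht'pos]
    exact_mod_cast h1
  have hmk : (1-δ+ε/4)*(t':ℝ) ≤ (((m+1-k : ℕ)) : ℝ) := by
    have hcast : (((m+1-k : ℕ)) : ℝ) = (m:ℝ) + 1 - k := by
      have := Nat.cast_sub (R := ℝ) hkm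
      push_cast at this ⊢
      rw [this]
    rw [hcast]
    linarith [hmge, hkle]
  -- divide by t'^k
  have hfin2 : (ε/2) * (1-δ+ε/4)^k ≤ (1-δ)^(k-1) := by
    have h1 : (ε/2) * ((1-δ+ε/4)*(t':ℝ))^k ≤ (t':ℝ)^k * (1-δ)^(k-1) := by
      calc (ε/2) * ((1-δ+ε/4)*(t':ℝ))^k ≤ (ε/2) * (((m+1-k : ℕ)) : ℝ)^k := by
            apply mul_le_mul_of_nonneg_left ?_ (by positivity)
            exact pow_le_pow_left₀ (by positivity) hmk k
        _ ≤ _ := hineq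
    have h2 : ((ε/2) * (1-δ+ε/4)^k) * (t':ℝ)^k ≤ ((1-δ)^(k-1)) * (t':ℝ)^k := by
      calc ((ε/2) * (1-δ+ε/4)^k) * (t':ℝ)^k = (ε/2) * ((1-δ+ε/4)*(t':ℝ))^k := by
            rw [mul_pow]; ring
        _ ≤ (t':ℝ)^k * (1-δ)^(k-1) := h1
        _ = ((1-δ)^(k-1)) * (t':ℝ)^k := by ring
    exact le_of_mul_le_mul_right h2 (by positivity)
  -- extract (1+ε/4)^(k-1) ≤ 4/ε
  have hδhalf : (1:ℝ)/2 ≤ 1-δ := by linarith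
  have hpow1 : ((1+ε/4)*(1-δ))^(k-1) ≤ (1-δ+ε/4)^(k-1) := by
    apply pow_le_pow_left₀ (by nlinarith) ?_ _
    nlinarith
  have hk1' : k = (k-1) + 1 := by omega
  have hfin3 : (ε/4) * ((1+ε/4)^(k-1) * (1-δ)^(k-1)) ≤ (1-δ)^(k-1) := by
    have e1 : (ε/4)*(1-δ+ε/4)^(k-1) ≤ (1-δ)^(k-1) := by
      have hb : (ε/4) ≤ (ε/2)*(1-δ+ε/4) := by nlinarith
      calc (ε/4)*(1-δ+ε/4)^(k-1) ≤ ((ε/2)*(1-δ+ε/4))*(1-δ+ε/4)^(k-1) :=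
            mul_le_mul_of_nonneg_right hb (by positivity)
        _ = (ε/2)*(1-δ+ε/4)^k := by
            conv_rhs => rw [hk1']
            rw [pow_succ]
            ring
        _ ≤ (1-δ)^(k-1) := hfin2
    calc (ε/4) * ((1+ε/4)^(k-1) * (1-δ)^(k-1)) = (ε/4) * ((1+ε/4)*(1-δ))^(k-1) := by
          rw [mul_pow]
      _ ≤ (ε/4)*(1-δ+ε/4)^(k-1) := mul_le_mul_of_nonneg_left hpow1 (by positivity)
      _ ≤ (1-δ)^(k-1) := e1
  have hfin4 : (1+ε/4)^(k-1) ≤ 4/ε := by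
    have hpos : (0:ℝ) < (1-δ)^(k-1) := by positivity
    have h1 : ((ε/4) * (1+ε/4)^(k-1)) * (1-δ)^(k-1) ≤ 1 * (1-δ)^(k-1) := by
      calc ((ε/4) * (1+ε/4)^(k-1)) * (1-δ)^(k-1)
          = (ε/4) * ((1+ε/4)^(k-1) * (1-δ)^(k-1)) := by ring
        _ ≤ (1-δ)^(k-1) := hfin3
        _ = 1 * (1-δ)^(k-1) := by ring
    have h2 : (ε/4) * (1+ε/4)^(k-1) ≤ 1 := le_of_mul_le_mul_right h1 hpos
    rw [le_div_iff₀ hε]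
    nlinarith [h2]
  -- logs
  have hlogk : ((k:ℝ)-1) * Real.log (1+ε/4) ≤ Real.log (4/ε) := by
    have h1 := Real.log_le_log (by positivity) hfin4
    rw [Real.log_pow] at h1
    have hc : (((k-1 : ℕ)) : ℝ) = (k:ℝ) - 1 := by
      have := Nat.cast_sub (R := ℝ) hk1
      push_cast at this ⊢
      rw [this]
    rw [hc] at h1
    exact h1
  have hlog8 : ε/8 ≤ Real.log (1+ε/4) := by
    have hx : (0:ℝ) < 1+ε/4 := by linarith
    have h := Real.log_le_sub_one_of_pos (x := (1+ε/4)⁻¹) (by positivity)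
    rw [Real.log_inv] at h
    have hinv : (1+ε/4)⁻¹ * (1+ε/4) = 1 := inv_mul_cancel₀ (ne_of_gt hx)
    nlinarith [h, hinv, hεhalf, hε]
  have hklog : (k:ℝ) ≤ 1 + (8/ε) * Real.log (4/ε) := by
    have hk0 : (0:ℝ) ≤ (k:ℝ) - 1 := by
      have : (1:ℝ) ≤ (k:ℝ) := by exact_mod_cast hk1
      linarith
    have h1 : ((k:ℝ)-1) * (ε/8) ≤ ((k:ℝ)-1) * Real.log (1+ε/4) :=
      mul_le_mul_of_nonneg_left hlog8 hk0
    have h2 : ((k:ℝ)-1) * (ε/8) ≤ Real.log (4/ε) := le_trans h1 hlogk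
    have h3 := mul_le_mul_of_nonneg_left h2 (by positivity : (0:ℝ) ≤ 8/ε)
    have h4 : (8/ε)*(((k:ℝ)-1)*(ε/8)) = (k:ℝ)-1 := by
      field_simp
    linarith [h3, h4.le, h4.ge]
  -- final bound on t'
  have ht'bound : (t':ℝ) ≤ (4/ε) * (1 + (8/ε) * Real.log (4/ε)) := by
    have h1 : (t':ℝ) ≤ (4/ε) * k := by
      rw [div_mul_eq_mul_div, le_div_iff₀ hε]
      nlinarith [hkge]
    calc (t':ℝ) ≤ (4/ε) * k := h1
      _ ≤ (4/ε) * (1 + (8/ε) * Real.log (4/ε)) :=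
          mul_le_mul_of_nonneg_left hklog (by positivity)
  have hlog4 : Real.log (4/ε) ≤ 3 * Real.log (1/ε) := by
    have he : (4:ℝ)/ε = 4 * (1/ε) := by ring
    rw [he, Real.log_mul (by norm_num) (by positivity)]
    have h4 : Real.log 4 = 2 * Real.log 2 := by
      rw [show (4:ℝ) = 2^2 by norm_num, Real.log_pow]
      push_cast
      ring
    rw [h4]
    linarith [hL2]
  apply hfinish ((t':ℝ) + 1) htt'
  have hlogpos : (0:ℝ) ≤ Real.log (1/ε) := by linarith
  have hε8 : (0:ℝ) < 8/ε := by positivity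
  have hstep : (t':ℝ) ≤ 4*(1/ε) + 96 * (1/ε)^2 * Real.log (1/ε) := by
    have h2 : (4/ε) * (1 + (8/ε) * Real.log (4/ε))
        ≤ (4/ε) * (1 + (8/ε) * (3 * Real.log (1/ε))) := by
      apply mul_le_mul_of_nonneg_left ?_ (by positivity)
      have := mul_le_mul_of_nonneg_left hlog4 (le_of_lt hε8)
      linarith
    have h3 : (4/ε) * (1 + (8/ε) * (3 * Real.log (1/ε)))
        = 4*(1/ε) + 96 * (1/ε)^2 * Real.log (1/ε) := by
      field_simp
      ring
    linarith [ht'bound, h2, h3.le, h3.ge]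
  linarith [hstep]

end Main

/-- There is an absolute constant `C > 0` such that for every `d ≥ 1`,
`0 < ε < 2^{-d}`, Abelian group `G`, function `f : {0,1}^n → G` and distinct
`d`-junta-sums `P₁, …, P_t` depending on pairwise disjoint sets of variables,
each with `δ(f, Pᵢ) ≤ 2^{-d} - ε`, one has `t ≤ C · ε⁻² · log(1/ε)`. -/
theorem stmt14 :
    ∃ C : ℝ, 0 < C ∧
      ∀ (d : ℕ), 1 ≤ d → ∀ ε : ℝ, 0 < ε → ε < 1 / 2 ^ d →
        ∀ (n t : ℕ) (G : Type u) [AddCommGroup G]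
          (f : (Fin n → Bool) → G) (P : Fin t → (Fin n → Bool) → G)
          (I : Fin t → Finset (Fin n)),
          Function.Injective P →
          (∀ i, IsJuntaSum d (P i)) →
          (∀ i, DependsOnlyOn (P i) (I i)) →
          (Pairwise fun i j => Disjoint (I i) (I j)) →
          (∀ i, hdist f (P i) ≤ 1 / 2 ^ d - ε) →
          (t : ℝ) ≤ C * (1 / ε ^ 2) * Real.log (1 / ε) :=
  stmt14'
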